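/- With H_p(θ,ω) := −(cos θ − ½)² + ½ω² and P(θ,ω) := γ(H_p(θ,ω) − H_p*), γ > 0, H_p* := −(cos θ* − ½)² for some θ* ∈ (−π/3, π/3), the function Φ := H_p − H_p* satisfies along solutions of the closed-loop pendulum of the previous context: Φ̇ = −γ ω² (cos θ)² Φ. Consequently, for every ε > 0 the set {(θ,ω) : |Φ(θ,ω)| < ε} is forward invariant. -/

import Mathlib

/-- With P = γ(H_p − H_p*) and Φ = H_p − H_p*, along closed-loop pendulum
solutions Φ̇ = −γ ω² (cos θ)² Φ; consequently, each set {|Φ| < ε} is forward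
invariant. -/
theorem stmt_12 (γ θs : ℝ) (hγ : 0 < γ)
    (hθs : θs ∈ Set.Ioo (-(Real.pi / 3)) (Real.pi / 3))
    (Hp : ℝ × ℝ → ℝ)
    (hHp : ∀ p : ℝ × ℝ, Hp p = -(Real.cos p.1 - 1 / 2) ^ 2 + (1 / 2) * p.2 ^ 2)
    (Hps : ℝ) (hHps : Hps = -(Real.cos θs - 1 / 2) ^ 2)
    (P Φ : ℝ × ℝ → ℝ)
    (hP : ∀ p, P p = γ * (Hp p - Hps))
    (hΦ : ∀ p, Φ p = Hp p - Hps)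
    (θ ω u : ℝ → ℝ)
    (hu : ∀ t, u t = 2 * Real.sin (θ t)
        + ω t * P (θ t, ω t) * Real.cos (θ t))
    (hθ : ∀ t, HasDerivAt θ (ω t) t)
    (hω : ∀ t, HasDerivAt ω (Real.sin (θ t) - u t * Real.cos (θ t)) t) :
    (∀ t, HasDerivAt (fun s => Φ (θ s, ω s))
        (-γ * (ω t) ^ 2 * (Real.cos (θ t)) ^ 2 * Φ (θ t, ω t)) t) ∧
    (∀ ε > 0, |Φ (θ 0, ω 0)| < ε → ∀ t, 0 ≤ t → |Φ (θ t, ω t)| < ε) := by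
  have hΦ' : ∀ p : ℝ × ℝ,
      Φ p = -(Real.cos p.1 - 1 / 2) ^ 2 + (1 / 2) * p.2 ^ 2 - Hps := by
    intro p; rw [hΦ, hHp]
  have key : ∀ t, HasDerivAt (fun s => Φ (θ s, ω s))
      (-γ * (ω t) ^ 2 * (Real.cos (θ t)) ^ 2 * Φ (θ t, ω t)) t := by
    intro t
    have h1 : HasDerivAt (fun s =>
        -(Real.cos (θ s) - 1 / 2) ^ 2 + (1 / 2) * (ω s) ^ 2 - Hps)
        (-(2 * (Real.cos (θ t) - 1 / 2) * (-Real.sin (θ t) * ω t))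
          + (1 / 2) * (2 * ω t * (Real.sin (θ t) - u t * Real.cos (θ t))))
        t := by
      have hc : HasDerivAt (fun s => Real.cos (θ s)) (-Real.sin (θ t) * ω t) t :=
        (Real.hasDerivAt_cos (θ t)).comp t (hθ t)
      have hA : HasDerivAt (fun s => (Real.cos (θ s) - 1 / 2) ^ 2)
          (2 * (Real.cos (θ t) - 1 / 2) * (-Real.sin (θ t) * ω t)) t := by
        have := ((hc.sub_const (1/2)).fun_pow 2)
        simpa [mul_comm, mul_assoc, mul_left_comm] using this
      have hB : HasDerivAt (fun s => (ω s) ^ 2)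
          (2 * ω t * (Real.sin (θ t) - u t * Real.cos (θ t))) t := by
        have := (hω t).fun_pow 2
        simpa [mul_comm, mul_assoc, mul_left_comm] using this
      exact ((hA.neg.add (hB.const_mul (1/2))).sub_const Hps)
    have heq : (fun s => Φ (θ s, ω s)) = fun s =>
        -(Real.cos (θ s) - 1 / 2) ^ 2 + (1 / 2) * (ω s) ^ 2 - Hps := by
      funext s; exact hΦ' (θ s, ω s)
    rw [heq]
    convert h1 using 1
    rw [hΦ' (θ t, ω t), hu t, hP (θ t, ω t), hHp (θ t, ω t)]
    simp only
    ring_nf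
  refine ⟨key, ?_⟩
  intro ε hε h0 t ht
  set f : ℝ → ℝ := fun s => Φ (θ s, ω s) with hf
  have hg : ∀ s, HasDerivAt (fun r => (f r) ^ 2)
      (2 * f s * (-γ * (ω s) ^ 2 * (Real.cos (θ s)) ^ 2 * f s)) s := by
    intro s
    have := (key s).fun_pow 2
    simpa [mul_comm, mul_assoc, mul_left_comm] using this
  have hanti : Antitone (fun r => (f r) ^ 2) := by
    apply antitone_of_deriv_nonpos
    · exact fun s => (hg s).differentiableAt
    · intro s
      rw [(hg s).deriv]
      have : 2 * f s * (-γ * (ω s) ^ 2 * (Real.cos (θ s)) ^ 2 * f s)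
          = -(2 * γ * ((ω s * Real.cos (θ s) * f s) ^ 2)) := by ring
      rw [this]
      exact neg_nonpos.mpr (by positivity)
  have hle : (f t) ^ 2 ≤ (f 0) ^ 2 := hanti ht
  have habs : |f t| ≤ |f 0| := by
    have := Real.sqrt_le_sqrt hle
    simpa [Real.sqrt_sq_eq_abs] using this
  exact lt_of_le_of_lt habs h0
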